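/- Let G be a linearly ordered commutative group, X a set, and consider the commutative group F of all functions X → G under pointwise multiplication, ordered pointwise. Let E₁, E₂ ⊆ F be subgroups that are sublattices (closed under pointwise ⊔) and convex (if f ≤ h ≤ g pointwise with f, g ∈ Eᵢ then h ∈ Eᵢ). Then: (1) Skel(E₁·E₂) = Skel(E₁) ∩ Skel(E₂), where E₁·E₂ = {f·g | f ∈ E₁, g ∈ E₂}; and (2) Skel(E₁ ∩ E₂) = Skel(E₁) ∪ Skel(E₂). Here Skel(S) := {x ∈ X | f(x) = 1 for all f ∈ S}. -/

import Mathlib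

/-- The skeleton of a set `S` of functions `X → G`: the points at which all members of `S`
take the value `1`. -/
def Skel {X G : Type*} [One G] (S : Set (X → G)) : Set X :=
  {x : X | ∀ f ∈ S, f x = 1}

/-- For kernels `E₁, E₂` (convex subgroups closed under pointwise `⊔`) of the group of
functions from `X` to a linearly ordered commutative group:
`Skel (E₁ · E₂) = Skel E₁ ∩ Skel E₂` and `Skel (E₁ ∩ E₂) = Skel E₁ ∪ Skel E₂`. -/
theorem skel_of_mul_and_inter {G X : Type*} [CommGroup G] [LinearOrder G] [IsOrderedMonoid G]
    (E₁ E₂ : Subgroup (X → G))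
    (hsup₁ : ∀ f ∈ E₁, ∀ g ∈ E₁, f ⊔ g ∈ E₁)
    (hsup₂ : ∀ f ∈ E₂, ∀ g ∈ E₂, f ⊔ g ∈ E₂)
    (hconv₁ : ∀ f g h : X → G, f ∈ E₁ → g ∈ E₁ → f ≤ h → h ≤ g → h ∈ E₁)
    (hconv₂ : ∀ f g h : X → G, f ∈ E₂ → g ∈ E₂ → f ≤ h → h ≤ g → h ∈ E₂) :
    Skel {h : X → G | ∃ f ∈ E₁, ∃ g ∈ E₂, h = f * g}
        = Skel (E₁ : Set (X → G)) ∩ Skel (E₂ : Set (X → G)) ∧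
    Skel ((E₁ : Set (X → G)) ∩ (E₂ : Set (X → G)))
        = Skel (E₁ : Set (X → G)) ∪ Skel (E₂ : Set (X → G)) := by
  constructor
  · ext x
    constructor
    · intro hx
      constructor
      · intro f hf
        exact (hx f ⟨f, hf, 1, E₂.one_mem, (mul_one f).symm⟩)
      · intro g hg
        have := hx g ⟨1, E₁.one_mem, g, hg, (one_mul g).symm⟩
        exact this
    · rintro ⟨h₁, h₂⟩ h ⟨f, hf, g, hg, rfl⟩
      simp [Pi.mul_apply, h₁ f hf, h₂ g hg]
  · ext x
    constructor
    · intro hx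
      by_contra hcon
      rw [Set.mem_union, not_or] at hcon
      obtain ⟨h₁, h₂⟩ := hcon
      simp only [Skel, Set.mem_setOf_eq, not_forall] at h₁ h₂
      obtain ⟨f, hf, hfx⟩ := h₁
      obtain ⟨g, hg, hgx⟩ := h₂
      set f' : X → G := f ⊔ f⁻¹ with hf'def
      set g' : X → G := g ⊔ g⁻¹ with hg'def
      have hf' : f' ∈ E₁ := hsup₁ f hf f⁻¹ (E₁.inv_mem hf)
      have hg' : g' ∈ E₂ := hsup₂ g hg g⁻¹ (E₂.inv_mem hg)
      have hf'pos : ∀ y, 1 ≤ f' y := fun y => le_max_iff.2 ((le_total 1 (f y)).imp id fun h => one_le_inv'.2 h)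
      have hg'pos : ∀ y, 1 ≤ g' y := fun y => le_max_iff.2 ((le_total 1 (g y)).imp id fun h => one_le_inv'.2 h)
      have hf'x : 1 < f' x := by
        rcases lt_or_gt_of_ne hfx with h | h
        · exact lt_max_of_lt_right (one_lt_inv_of_inv h)
        · exact lt_max_of_lt_left h
      have hg'x : 1 < g' x := by
        rcases lt_or_gt_of_ne hgx with h | h
        · exact lt_max_of_lt_right (one_lt_inv_of_inv h)
        · exact lt_max_of_lt_left h
      set k : X → G := fun y => min (f' y) (g' y) with hk
      have hk₁ : k ∈ E₁ := hconv₁ 1 f' k E₁.one_mem hf'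
        (fun y => le_min (hf'pos y) (hg'pos y)) (fun y => min_le_left _ _)
      have hk₂ : k ∈ E₂ := hconv₂ 1 g' k E₂.one_mem hg'
        (fun y => le_min (hf'pos y) (hg'pos y)) (fun y => min_le_right _ _)
      have he : k x = 1 := hx k ⟨hk₁, hk₂⟩
      exact absurd he (ne_of_gt (lt_min hf'x hg'x))

    · rintro (hx | hx) h ⟨h₁, _⟩
      · exact hx h h₁
      · exact hx h (by assumption)
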